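/- For any finite set N of agents, finite set M of indivisible items, normalized monotone valuation functions v_i, and any subset P ⊆ N with |N \ P| = 1, there exists a complete allocation (A_1, ..., A_n) of M that is EFprior with respect to P. -/

import Mathlib

/-- `A` is a (complete) allocation of the item set `M` among `n` agents:
a partition of `M` into `n` (possibly empty) bundles. -/
def IsAllocation {ι : Type*} [DecidableEq ι] {n : ℕ} (M : Finset ι)
    (A : Fin n → Finset ι) : Prop :=
  (∀ i j : Fin n, i ≠ j → Disjoint (A i) (A j)) ∧ Finset.univ.biUnion A = M

/-- Envy-freeness up to one item. -/
def EF1 {ι : Type*} [DecidableEq ι] {n : ℕ} (v : Fin n → Finset ι → ℝ)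
    (A : Fin n → Finset ι) : Prop :=
  ∀ i j : Fin n, i ≠ j → A j = ∅ ∨ ∃ g ∈ A j, v i ((A j).erase g) ≤ v i (A i)

/-- Envy-freeness with prioritized agents `P`: EF1, and no agent in `P`
envies any agent outside `P`. -/
def EFprior {ι : Type*} [DecidableEq ι] {n : ℕ} (v : Fin n → Finset ι → ℝ)
    (A : Fin n → Finset ι) (P : Finset (Fin n)) : Prop :=
  EF1 v A ∧ ∀ i ∈ P, ∀ j ∉ P, v i (A j) ≤ v i (A i)

/-! ### Auxiliary machinery: cyclic permutations built from lists -/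

section cyc
variable {α : Type*} [DecidableEq α]

/-- The cyclic permutation determined by a list: each entry maps to the next one,
the last entry maps to the head, everything else is fixed. -/
def cycPerm : List α → Equiv.Perm α
  | [] => 1
  | [_] => 1
  | a :: b :: l => Equiv.swap a b * cycPerm (b :: l)

theorem cycPerm_fix : ∀ {l : List α} {x : α}, x ∉ l → cycPerm l x = x
  | [], _, _ => rfl
  | [_], _, _ => rfl
  | a :: b :: l, x, hx => by
    simp only [List.mem_cons, not_or] at hx
    simp only [cycPerm, Equiv.Perm.mul_apply]
    rw [cycPerm_fix (by simp [hx.2.1, hx.2.2])]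
    exact Equiv.swap_apply_of_ne_of_ne hx.1 hx.2.1

theorem cycPerm_getLast : ∀ {l : List α} (h : l ≠ []), l.Nodup →
    cycPerm l (l.getLast h) = l.head h
  | [_], _, _ => by simp [cycPerm]
  | a :: b :: l, _, hnd => by
    have hnd' : (b :: l).Nodup := hnd.of_cons
    have hg : (a :: b :: l).getLast (by simp) = (b :: l).getLast (by simp) :=
      List.getLast_cons (by simp)
    simp only [cycPerm, Equiv.Perm.mul_apply, hg]
    rw [cycPerm_getLast (by simp) hnd']
    simp only [List.head_cons]
    exact Equiv.swap_apply_right a b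

theorem cycPerm_head {q s : α} {rest : List α} (hnd : (q :: s :: rest).Nodup) :
    cycPerm (q :: s :: rest) q = s := by
  have hq : q ∉ s :: rest := by
    simp only [List.nodup_cons] at hnd; exact hnd.1
  simp only [cycPerm, Equiv.Perm.mul_apply, cycPerm_fix hq, Equiv.swap_apply_left]

theorem cycPerm_chain {r : α → α → Prop} : ∀ {l : List α} {y : α},
    (y :: l).Nodup → List.Chain r y l → ∀ a ∈ y :: l,
    a ≠ (y :: l).getLast (by simp) → r a (cycPerm (y :: l) a)
  | [], y, _, _, a, ha, hne => by simp at ha; simp [ha] at hne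
  | z :: l, y, hnd, hch, a, ha, hne => by
    have hnd' : (z :: l).Nodup := hnd.of_cons
    have hgl : (y :: z :: l).getLast (by simp) = (z :: l).getLast (by simp) :=
      List.getLast_cons (by simp)
    rcases List.mem_cons.1 ha with rfl | ha'
    · rw [cycPerm_head hnd]
      exact (List.chain_cons.1 hch).1
    · have hay : a ≠ y := by
        rintro rfl
        simp only [List.nodup_cons] at hnd
        exact hnd.1 ha'
      have hne' : a ≠ (z :: l).getLast (by simp) := by rw [hgl] at hne; exact hne
      have ih := cycPerm_chain hnd' (List.chain_cons.1 hch).2 a ha' hne'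
      have key : cycPerm (y :: z :: l) a = cycPerm (z :: l) a := by
        simp only [cycPerm, Equiv.Perm.mul_apply]
        apply Equiv.swap_apply_of_ne_of_ne
        · intro hcy
          have : a = y := (cycPerm (z :: l)).injective
            (by rw [hcy, cycPerm_fix (by simp only [List.nodup_cons] at hnd; exact hnd.1)])
          exact hay this
        · intro hcz
          have hlast := cycPerm_getLast (l := z :: l) (by simp) hnd'
          simp only [List.head_cons] at hlast
          have : a = (z :: l).getLast (by simp) := (cycPerm (z :: l)).injective
            (by rw [hcz, hlast])
          exact hne' this
      rw [key]; exact ih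

end cyc

/-! ### Auxiliary machinery: chains and cycles of a relation -/

section chains
variable {α : Type*} {r : α → α → Prop}

theorem efp_dup_decomp : ∀ {l : List α}, ¬ l.Nodup →
    ∃ (a : α) (l₁ l₂ l₃ : List α), l = l₁ ++ a :: l₂ ++ a :: l₃
  | [], h => absurd List.nodup_nil h
  | b :: t, h => by
    by_cases hb : b ∈ t
    · obtain ⟨t₁, t₂, rfl⟩ := List.append_of_mem hb
      exact ⟨b, [], t₁, t₂, rfl⟩
    · have ht : ¬ t.Nodup := by
        intro hnd; exact h (List.nodup_cons.2 ⟨hb, hnd⟩)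
      obtain ⟨a, l₁, l₂, l₃, rfl⟩ := efp_dup_decomp ht
      exact ⟨a, b :: l₁, l₂, l₃, rfl⟩

theorem efp_shrink_cycle (r : α → α → Prop) : ∀ (N : ℕ) (l : List α) (y : α),
    l.length ≤ N → List.Chain r y (l ++ [y]) →
    ∃ (y' : α) (l' : List α), (y' :: l').Nodup ∧ List.Chain r y' (l' ++ [y']) := by
  intro N
  induction N with
  | zero =>
    intro l y hl hch
    obtain rfl := List.length_eq_zero_iff.1 (Nat.le_zero.1 hl)
    exact ⟨y, [], List.nodup_singleton y, hch⟩
  | succ N ih =>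
    intro l y hl hch
    by_cases hnd : (y :: l).Nodup
    · exact ⟨y, l, hnd, hch⟩
    · obtain ⟨a, l₁, l₂, l₃, hdec⟩ := efp_dup_decomp hnd
      cases l₁ with
      | nil =>
        simp only [List.nil_append, List.cons.injEq] at hdec
        obtain ⟨rfl, rfl⟩ := hdec
        have := (List.isChain_cons_split (l₁ := l₂) (l₂ := l₃ ++ [y]) (c := y)).1
          (by simpa using hch : List.Chain r y (l₂ ++ y :: (l₃ ++ [y])))
        refine ih l₂ y ?_ this.1
        have : (l₂ ++ y :: l₃).length ≤ N + 1 := hl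
        simp at this; omega
      | cons c l₁' =>
        simp only [List.cons_append, List.cons.injEq] at hdec
        obtain ⟨rfl, rfl⟩ := hdec
        have hch2 : List.Chain r y (l₁' ++ a :: (l₂ ++ a :: (l₃ ++ [y]))) := by
          simpa using hch
        have h1 := (List.isChain_cons_split.1
          (hch2 : List.IsChain r (y :: (l₁' ++ a :: (l₂ ++ a :: (l₃ ++ [y])))))).2
        have h2 := (List.isChain_cons_split (l₁ := l₂) (l₂ := l₃ ++ [y]) (c := a)).1 h1
        refine ih l₂ a ?_ h2.1
        have : (l₁' ++ a :: l₂ ++ a :: l₃).length ≤ N + 1 := hl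
        simp at this; omega

theorem efp_exists_nodup_cycle {x : α} (h : Relation.TransGen r x x) :
    ∃ (y : α) (l : List α), (y :: l).Nodup ∧ List.Chain r y (l ++ [y]) := by
  obtain ⟨c, hxc, hcx⟩ := Relation.TransGen.head'_iff.1 h
  obtain ⟨l, hch, hlast⟩ := List.exists_isChain_cons_of_relationReflTransGen hcx
  have hfull : List.Chain r x (c :: l) := List.chain_cons.2 ⟨hxc, hch⟩
  have hne : c :: l ≠ [] := by simp
  have hdec : c :: l = (c :: l).dropLast ++ [(c :: l).getLast hne] :=
    (List.dropLast_append_getLast hne).symm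
  have hgl : (c :: l).getLast hne = x := hlast
  rw [hgl] at hdec
  rw [hdec] at hfull
  exact efp_shrink_cycle r _ _ x le_rfl hfull

theorem efp_chain_targets : ∀ {l : List α} {y : α}, List.Chain r y l → ∀ a ∈ l, ∃ b, r b a
  | [], _, _, a, ha => absurd ha (by simp)
  | _ :: _, y, hch, a, ha => by
    rcases List.chain_cons.1 hch with ⟨h1, h2⟩
    rcases List.mem_cons.1 ha with rfl | ha'
    · exact ⟨y, h1⟩
    · exact efp_chain_targets h2 a ha'

theorem efp_chain_head : ∀ {l : List α} {y : α}, List.Chain r y l → l ≠ [] → ∃ b, r y b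
  | [], _, _, h => absurd rfl h
  | z :: _, _, hch, _ => ⟨z, (List.chain_cons.1 hch).1⟩

theorem efp_chain_last_edge : ∀ (l : List α) (y z : α), List.Chain r z (l ++ [y]) →
    r ((z :: l).getLast (by simp)) y
  | [], y, z, hch => by exact (List.chain_cons.1 hch).1
  | w :: t, y, z, hch => by
    have hch' : List.Chain r z (w :: (t ++ [y])) := by simpa using hch
    have := efp_chain_last_edge t y w (List.chain_cons.1 hch').2
    rw [List.getLast_cons (by simp)]
    exact this

theorem efp_chain_init : ∀ (l : List α) (y z : α),
    List.Chain r z (l ++ [y]) → List.Chain r z l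
  | [], _, _, _ => List.Chain.nil
  | w :: t, y, z, hch => by
    have h := List.chain_cons.1 (hch : List.Chain r z (w :: (t ++ [y])))
    exact List.chain_cons.2 ⟨h.1, efp_chain_init t y w h.2⟩

theorem efp_chain_snoc : ∀ (l : List α) (s i : α),
    List.Chain r s l → r ((s :: l).getLast (by simp)) i → List.Chain r s (l ++ [i])
  | [], s, i, _, hlast => by
    simpa using List.Chain.cons (by simpa using hlast) List.Chain.nil
  | w :: t, s, i, hch, hlast => by
    rcases List.chain_cons.1 hch with ⟨h1, h2⟩
    have hlast' : ((w :: t).getLast (by simp)) = ((s :: w :: t).getLast (by simp)) :=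
      (List.getLast_cons (by simp)).symm
    exact List.chain_cons.2 ⟨h1, efp_chain_snoc t w i h2 (by rw [hlast']; exact hlast)⟩

theorem efp_chain_reach : ∀ {l : List α} {y : α},
    List.Chain r y l → ∀ a ∈ y :: l, Relation.ReflTransGen r a ((y :: l).getLast (by simp))
  | [], y, _, a, ha => by
    simp at ha; subst ha; exact Relation.ReflTransGen.refl
  | z :: t, y, hch, a, ha => by
    rcases List.chain_cons.1 hch with ⟨h1, h2⟩
    have hgl : ((y :: z :: t).getLast (by simp)) = ((z :: t).getLast (by simp)) :=
      List.getLast_cons (by simp)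
    rw [hgl]
    rcases List.mem_cons.1 ha with rfl | ha'
    · exact Relation.ReflTransGen.head h1 (efp_chain_reach h2 z (by simp))
    · exact efp_chain_reach h2 a ha'

end chains

/-! ### The envy relation, acyclic reshuffles, and paths from unenvied agents -/

open Finset

section main
variable {ι : Type*} [DecidableEq ι] {n : ℕ}

/-- Strict envy (restricted to agents in `P`) under the allocation `C`. -/
def Envy (v : Fin n → Finset ι → ℝ) (P : Finset (Fin n)) (C : Fin n → Finset ι)
    (i j : Fin n) : Prop :=
  i ∈ P ∧ j ∈ P ∧ v i (C i) < v i (C j)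

/-- By permuting bundles among the agents of `P` (fixing `q`'s bundle) in a way that
only improves every agent, we can make the envy graph on `P` acyclic. -/
theorem exists_acyclic_perm (v : Fin n → Finset ι → ℝ) (P : Finset (Fin n))
    (q : Fin n) (hq : q ∉ P) (A : Fin n → Finset ι) :
    ∃ σ : Equiv.Perm (Fin n), σ q = q ∧ (∀ i, v i (A i) ≤ v i (A (σ i))) ∧
      ∀ x, ¬ Relation.TransGen (Envy v P (fun i => A (σ i))) x x := by
  classical
  set G : Finset (Equiv.Perm (Fin n)) :=
    univ.filter (fun σ => σ q = q ∧ ∀ i, v i (A i) ≤ v i (A (σ i))) with hG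
  have hGne : G.Nonempty := ⟨1, by simp [hG]⟩
  obtain ⟨σ, hσG, hmax⟩ := G.exists_max_image (fun σ => ∑ i, v i (A (σ i))) hGne
  rw [hG, mem_filter] at hσG
  obtain ⟨-, hσq, himp⟩ := hσG
  refine ⟨σ, hσq, himp, ?_⟩
  intro x hx
  set C : Fin n → Finset ι := fun i => A (σ i) with hC
  set E : Fin n → Fin n → Prop := Envy v P C with hE
  obtain ⟨y, l, hnd, hch⟩ := efp_exists_nodup_cycle hx
  cases l with
  | nil =>
    have : E y y := (List.chain_cons.1 hch).1
    exact absurd this.2.2 (lt_irrefl _)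
  | cons z t =>
    set L : List (Fin n) := y :: z :: t with hL
    set τ : Equiv.Perm (Fin n) := cycPerm L with hτ
    have hmemP : ∀ a ∈ L, a ∈ P := by
      intro a ha
      rcases List.mem_cons.1 ha with rfl | ha'
      · obtain ⟨b, hb⟩ := efp_chain_head hch (by simp)
        exact hb.1
      · have hchain' : List.Chain E y (z :: t ++ [y]) := hch
        obtain ⟨b, hb⟩ := efp_chain_targets hchain' a (by
          rcases List.mem_cons.1 ha' with rfl | h
          · simp
          · simp [h])
        exact hb.2.1
    have hstrict : ∀ a ∈ L, v a (C a) < v a (C (τ a)) := by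
      intro a ha
      by_cases hlast : a = L.getLast (by simp [hL])
      · subst hlast
        have h1 : τ (L.getLast (by simp [hL])) = y := by
          rw [hτ, cycPerm_getLast (by simp [hL]) hnd]
          simp [hL]
        have h2 : E (L.getLast (by simp [hL])) y := by
          have := efp_chain_last_edge (z :: t) y y (by simpa [hL] using hch)
          simpa [hL] using this
        rw [h1]; exact h2.2.2
      · have hchain2 : List.Chain E y (z :: t) := by
          have h2 : List.Chain E y ((z :: t) ++ [y]) := by simpa [hL] using hch
          exact efp_chain_init (z :: t) y y h2
        have := cycPerm_chain hnd (l := z :: t) hchain2 a (by simpa [hL] using ha)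
          (by simpa [hL] using hlast)
        exact this.2.2
    have hmoved : ∀ a, τ a ≠ a → a ∈ L := by
      intro a ha; by_contra h; exact ha (cycPerm_fix h)
    have hτq : τ q = q := cycPerm_fix (fun hmem => hq (hmemP q hmem))
    have himp' : ∀ i, v i (A i) ≤ v i (A ((σ * cycPerm L) i)) := by
      intro i
      by_cases hi : τ i = i
      · show v i (A i) ≤ v i (A (σ (τ i))); rw [hi]; exact himp i
      · exact (himp i).trans (le_of_lt (hstrict i (hmoved i hi)))
    have hfeas : (σ * cycPerm L) ∈ G := by
      rw [hG, mem_filter]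
      refine ⟨mem_univ _, ?_, himp'⟩
      show σ (τ q) = q
      rw [hτq, hσq]
    have hlt : ∑ i, v i (A (σ i)) < ∑ i, v i (A ((σ * cycPerm L) i)) := by
      apply Finset.sum_lt_sum
      · intro i _
        by_cases hi : τ i = i
        · show v i (A (σ i)) ≤ v i (A (σ (τ i))); rw [hi]
        · exact le_of_lt (hstrict i (hmoved i hi))
      · refine ⟨y, mem_univ _, ?_⟩
        exact hstrict y (by simp [hL])
    exact absurd (hmax _ hfeas) (not_le.2 hlt)

/-- In an acyclic envy graph, every agent of `P` is reachable along envy edges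
from some agent of `P` that nobody envies. -/
theorem exists_path (v : Fin n → Finset ι → ℝ) (P : Finset (Fin n))
    (C : Fin n → Finset ι)
    (hwf : ∀ x, ¬ Relation.TransGen (Envy v P C) x x) :
    ∀ i ∈ P, ∃ (s : Fin n) (l : List (Fin n)),
      s ∈ P ∧ (∀ j, ¬ Envy v P C j s) ∧ (s :: l).Nodup ∧
      List.Chain (Envy v P C) s l ∧ (s :: l).getLast (by simp) = i ∧
      (∀ a ∈ s :: l, a ∈ P) := by
  classical
  set E := Envy v P C with hE
  have hwfE : WellFounded E := by
    have hirr : IsIrrefl (Fin n) (Relation.TransGen E) := ⟨fun x hx => hwf x hx⟩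
    exact Subrelation.wf (fun h => Relation.TransGen.single h)
      (Finite.wellFounded_of_trans_of_irrefl (Relation.TransGen E))
  intro i
  induction i using WellFounded.induction hwfE with
  | _ i IH =>
    intro hi
    by_cases hsrc : ∃ j, E j i
    · obtain ⟨j, hj⟩ := hsrc
      obtain ⟨s, l, hsP, hsun, hnd, hch, hlast, hmem⟩ := IH j hj hj.1
      refine ⟨s, l ++ [i], hsP, hsun, ?_, ?_, ?_, ?_⟩
      · have hiNot : i ∉ s :: l := by
          intro hmem'
          have hreach := efp_chain_reach hch i hmem'
          rw [hlast] at hreach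
          exact hwf i (Relation.TransGen.tail' hreach hj)
        rw [show s :: (l ++ [i]) = (s :: l) ++ [i] by simp, List.nodup_append]
        exact ⟨hnd, List.nodup_singleton i, by
          simp
          exact ⟨fun h => hiNot (by rw [← h]; simp), fun a ha h => hiNot (by rw [← h]; simp [ha])⟩⟩
      · exact efp_chain_snoc l s i hch (by rw [hlast]; exact hj)
      · rw [List.getLast_cons (by simp)]
        exact List.getLast_append_singleton _
      · intro a ha
        rcases List.mem_cons.1 ha with rfl | ha'
        · exact hsP
        · rcases List.mem_append.1 ha' with h | h
          · exact hmem a (List.mem_cons.2 (Or.inr h))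
          · simp at h; subst h; exact hi
    · push_neg at hsrc
      exact ⟨i, [], hi, hsrc, List.nodup_singleton i, List.Chain.nil, rfl, by
        intro a ha; simp at ha; subst ha; exact hi⟩

/-- Final assembly: adding item `g` to bundle `t` and permuting by `π` keeps
everything fair, given suitable hypotheses. -/
theorem fin_step (v : Fin n → Finset ι → ℝ) (M S : Finset ι) (g : ι)
    (hmono : ∀ i : Fin n, ∀ S T : Finset ι, T ⊆ S → S ⊆ M → v i T ≤ v i S)
    (hSM : S ⊆ M) (hgM : g ∈ M) (hgS : g ∉ S)
    (P : Finset (Fin n)) (q : Fin n)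
    (C : Fin n → Finset ι) (hCalloc : IsAllocation S C) (hCEF : EF1 v C)
    (t : Fin n) (ht : ∀ j, v j (C t) ≤ v j (C j))
    (π : Equiv.Perm (Fin n))
    (B : Fin n → Finset ι)
    (hB : B = fun j => Function.update C t (insert g (C t)) (π j))
    (hP1 : ∀ j, v j (C j) ≤ v j (B j))
    (hP3 : ∀ j ∈ P, v j (B q) ≤ v j (C j)) :
    IsAllocation (insert g S) B ∧ EF1 v B ∧ ∀ j ∈ P, v j (B q) ≤ v j (B j) := by
  classical
  set D : Fin n → Finset ι := Function.update C t (insert g (C t)) with hD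
  have hCsub : ∀ k, C k ⊆ S := by
    intro k
    rw [← hCalloc.2]
    exact subset_biUnion_of_mem C (mem_univ k)
  have hgC : ∀ k, g ∉ C k := fun k hk => hgS (hCsub k hk)
  have hDval : ∀ k, k ≠ t → D k = C k := by
    intro k hk; rw [hD]; exact Function.update_of_ne hk _ _
  have hDt : D t = insert g (C t) := by rw [hD]; exact Function.update_self _ _ _
  have hDsub : ∀ k, D k ⊆ insert g S := by
    intro k
    by_cases hk : k = t
    · rw [hk, hDt]
      exact insert_subset_insert _ (hCsub t)
    · rw [hDval k hk]
      exact (hCsub k).trans (subset_insert _ _)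
  have hDdisj : ∀ a b, a ≠ b → Disjoint (D a) (D b) := by
    intro a b hab
    by_cases hat : a = t
    · have hbt : b ≠ t := fun h => hab (hat.trans h.symm)
      rw [hat, hDt, hDval b hbt, Finset.disjoint_insert_left]
      exact ⟨hgC b, hat ▸ hCalloc.1 a b hab⟩
    · by_cases hbt : b = t
      · rw [hbt, hDt, hDval a hat, Finset.disjoint_insert_right]
        exact ⟨hgC a, hbt ▸ hCalloc.1 a b hab⟩
      · rw [hDval a hat, hDval b hbt]
        exact hCalloc.1 a b hab
  have hBD : ∀ j, B j = D (π j) := by intro j; rw [hB]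
  constructor
  · constructor
    · intro a b hab
      rw [hBD a, hBD b]
      exact hDdisj _ _ (fun h => hab (π.injective h))
    · ext x
      simp only [mem_biUnion, mem_univ, true_and]
      constructor
      · rintro ⟨k, hk⟩
        rw [hBD k] at hk
        exact hDsub _ hk
      · intro hx
        rcases Finset.mem_insert.1 hx with rfl | hxS
        · exact ⟨π.symm t, by rw [hBD, Equiv.apply_symm_apply, hDt]; exact mem_insert_self _ _⟩
        · have : x ∈ Finset.univ.biUnion C := by rw [hCalloc.2]; exact hxS
          simp only [mem_biUnion, mem_univ, true_and] at this
          obtain ⟨k, hk⟩ := this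
          refine ⟨π.symm k, ?_⟩
          rw [hBD, Equiv.apply_symm_apply]
          by_cases hkt : k = t
          · rw [hkt, hDt]; exact mem_insert_of_mem (hkt ▸ hk)
          · rw [hDval k hkt]; exact hk
  constructor
  · intro i j hij
    by_cases hjt : π j = t
    · right
      refine ⟨g, ?_, ?_⟩
      · rw [hBD, hjt, hDt]; exact mem_insert_self _ _
      · rw [hBD, hjt, hDt, Finset.erase_insert (hgC t)]
        exact (ht i).trans (hP1 i)
    · by_cases hik : i = π j
      · by_cases hempty : C i = ∅
        · left; rw [hBD, hDval _ hjt, ← hik, hempty]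
        · right
          obtain ⟨h, hh⟩ := Finset.nonempty_iff_ne_empty.2 hempty
          refine ⟨h, by rw [hBD, hDval _ hjt, ← hik]; exact hh, ?_⟩
          have : v i ((C i).erase h) ≤ v i (C i) :=
            hmono i (C i) _ (Finset.erase_subset _ _) ((hCsub i).trans hSM)
          rw [hBD, hDval _ hjt, ← hik]
          exact this.trans (hP1 i)
      · rcases hCEF i (π j) hik with hemp | ⟨h, hh, hle⟩
        · left; rw [hBD, hDval _ hjt, hemp]
        · right
          refine ⟨h, by rw [hBD, hDval _ hjt]; exact hh, ?_⟩
          rw [hBD, hDval _ hjt]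
          exact hle.trans (hP1 i)
  · intro j hj
    exact (hP3 j hj).trans (hP1 j)

end main

section step
variable {ι : Type*} [DecidableEq ι] {n : ℕ}

/-- One step of the allocation procedure: one more item can always be allocated. -/
theorem step_lemma (v : Fin n → Finset ι → ℝ) (M : Finset ι)
    (hmono : ∀ i : Fin n, ∀ S T : Finset ι, T ⊆ S → S ⊆ M → v i T ≤ v i S)
    (P : Finset (Fin n)) (q : Fin n) (hq : q ∉ P) (hPq : ∀ j, j ∉ P → j = q)
    (S : Finset ι) (hSM : S ⊆ M) (g : ι) (hgM : g ∈ M) (hgS : g ∉ S)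
    (A : Fin n → Finset ι) (hA : IsAllocation S A) (hEF : EF1 v A)
    (hpr : ∀ i ∈ P, v i (A q) ≤ v i (A i)) :
    ∃ B : Fin n → Finset ι, IsAllocation (insert g S) B ∧ EF1 v B ∧
      ∀ i ∈ P, v i (B q) ≤ v i (B i) := by
  classical
  obtain ⟨σ, hσq, himp, hacyc⟩ := exists_acyclic_perm v P q hq A
  set C : Fin n → Finset ι := fun i => A (σ i) with hC
  have hCalloc : IsAllocation S C := by
    constructor
    · intro i j hij
      exact hA.1 _ _ (fun h => hij (σ.injective h))
    · ext x
      simp only [mem_biUnion, mem_univ, true_and]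
      rw [← hA.2]
      simp only [mem_biUnion, mem_univ, true_and]
      constructor
      · rintro ⟨k, hk⟩; exact ⟨σ k, hk⟩
      · rintro ⟨k, hk⟩; exact ⟨σ.symm k, by rw [hC]; simpa using hk⟩
  have hCsub : ∀ k, C k ⊆ S := by
    intro k
    rw [← hCalloc.2]
    exact subset_biUnion_of_mem C (mem_univ k)
  have hCq : C q = A q := by rw [hC]; simp [hσq]
  have hCpr : ∀ i ∈ P, v i (C q) ≤ v i (C i) := by
    intro i hi
    rw [hCq]
    exact (hpr i hi).trans (himp i)
  have hCEF : EF1 v C := by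
    intro i j hij
    by_cases hik : i = σ j
    · by_cases hempty : C j = ∅
      · exact Or.inl hempty
      · right
        obtain ⟨h, hh⟩ := Finset.nonempty_iff_ne_empty.2 hempty
        refine ⟨h, hh, ?_⟩
        have h1 : v i ((C j).erase h) ≤ v i (C j) :=
          hmono i (C j) _ (Finset.erase_subset _ _) ((hCsub j).trans hSM)
        have h2 : C j = A i := by show A (σ j) = A i; rw [← hik]
        refine h1.trans ?_
        rw [h2]
        exact himp i
    · rcases hEF i (σ j) hik with hemp | ⟨h, hh, hle⟩
      · exact Or.inl hemp
      · exact Or.inr ⟨h, hh, hle.trans (himp i)⟩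
  have hCM : ∀ k, C k ⊆ M := fun k => (hCsub k).trans hSM
  by_cases hcaseA : ∃ s ∈ P, (∀ j ∈ P, v j (C s) ≤ v j (C j)) ∧ v q (C s) ≤ v q (C q)
  · -- give g to an unenvied agent in P whom q does not envy
    obtain ⟨s, hsP, hsun, hsq⟩ := hcaseA
    have hqs : q ≠ s := fun h => hq (h ▸ hsP)
    have := fin_step v M S g hmono hSM hgM hgS P q C hCalloc hCEF s
      (by
        intro j
        by_cases hj : j ∈ P
        · exact hsun j hj
        · rw [hPq j hj]; exact hsq)
      1 (Function.update C s (insert g (C s)))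
      (by funext j; rfl)
      (by
        intro j
        by_cases hjs : j = s
        · subst hjs
          rw [Function.update_self]
          exact hmono j _ _ (subset_insert _ _) (insert_subset hgM (hCM j))
        · rw [Function.update_of_ne hjs])
      (by
        intro j hj
        rw [Function.update_of_ne hqs]
        exact hCpr j hj)
    exact ⟨_, this⟩
  · by_cases hcaseB1 : ∀ i ∈ P, v i (insert g (C q)) ≤ v i (C i)
    · -- give g to q
      have := fin_step v M S g hmono hSM hgM hgS P q C hCalloc hCEF q
        (by
          intro j
          by_cases hj : j ∈ P
          · exact hCpr j hj
          · rw [hPq j hj])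
        1 (Function.update C q (insert g (C q)))
        (by funext j; rfl)
        (by
          intro j
          by_cases hjq : j = q
          · subst hjq
            rw [Function.update_self]
            exact hmono j _ _ (subset_insert _ _) (insert_subset hgM (hCM j))
          · rw [Function.update_of_ne hjq])
        (by
          intro j hj
          rw [Function.update_self]
          exact hcaseB1 j hj)
      exact ⟨_, this⟩
    · -- give g to q and rotate a cycle through q
      push_neg at hcaseB1
      push_neg at hcaseA
      obtain ⟨i₀, hi₀P, hi₀lt⟩ := hcaseB1
      obtain ⟨s, l, hsP, hsun, hnd, hch, hlast, hmem⟩ := exists_path v P C hacyc i₀ hi₀P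
      have hsunle : ∀ j ∈ P, v j (C s) ≤ v j (C j) := by
        intro j hj
        by_contra hlt
        exact hsun j ⟨hj, hsP, not_le.1 hlt⟩
      have hqslt : v q (C q) < v q (C s) := hcaseA s hsP hsunle
      have hqs : q ≠ s := fun h => hq (h ▸ hsP)
      have hqsl : q ∉ s :: l := fun h => hq (hmem q h)
      have hndL : (q :: s :: l).Nodup := List.nodup_cons.2 ⟨hqsl, hnd⟩
      have hchain : List.Chain (fun a b => v a (C a) < v a (C b)) q (s :: l) :=
        List.chain_cons.2 ⟨hqslt, List.IsChain.imp (by intro a b h; exact h.2.2) hch⟩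
      have hglast : (q :: s :: l).getLast (by simp) = i₀ := by
        rw [List.getLast_cons (by simp)]
        exact hlast
      have hπq : cycPerm (q :: s :: l) q = s := cycPerm_head hndL
      have hπlast : cycPerm (q :: s :: l) i₀ = q := by
        have h1 := cycPerm_getLast (l := q :: s :: l) (by simp) hndL
        have h2 : cycPerm (q :: s :: l) i₀ = cycPerm (q :: s :: l)
            ((q :: s :: l).getLast (by simp)) := congrArg _ hglast.symm
        rw [h2, h1]
        rfl
      have := fin_step v M S g hmono hSM hgM hgS P q C hCalloc hCEF q
        (by
          intro j
          by_cases hj : j ∈ P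
          · exact hCpr j hj
          · rw [hPq j hj])
        (cycPerm (q :: s :: l))
        (fun j => Function.update C q (insert g (C q)) (cycPerm (q :: s :: l) j))
        rfl
        (by
          intro j
          show v j (C j) ≤ v j (Function.update C q (insert g (C q))
            (cycPerm (q :: s :: l) j))
          by_cases hjL : j ∈ q :: s :: l
          · by_cases hji : j = i₀
            · have hju : cycPerm (q :: s :: l) j = q := by rw [hji, hπlast]
              rw [hju, Function.update_self, hji]
              exact le_of_lt hi₀lt
            · have hne : j ≠ (q :: s :: l).getLast (by simp) := by
                rw [hglast]; exact hji
              have hrj := cycPerm_chain hndL hchain j hjL hne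
              have hπjq : cycPerm (q :: s :: l) j ≠ q := fun h =>
                hji ((cycPerm (q :: s :: l)).injective (h.trans hπlast.symm))
              rw [Function.update_of_ne hπjq]
              exact le_of_lt hrj
          · have hfix : cycPerm (q :: s :: l) j = j := cycPerm_fix hjL
            have hjq : j ≠ q := fun h => hjL (h ▸ (by simp : q ∈ q :: s :: l))
            rw [hfix, Function.update_of_ne hjq])
        (by
          intro j hj
          show v j (Function.update C q (insert g (C q))
            (cycPerm (q :: s :: l) q)) ≤ v j (C j)
          rw [hπq, Function.update_of_ne (Ne.symm hqs)]
          exact hsunle j hj)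
      exact ⟨_, this⟩

end step

/-- If there is exactly one non-prioritized agent, an EFprior allocation
always exists. -/
theorem efprior_exists_single_Q {ι : Type*} [DecidableEq ι] (n : ℕ) (M : Finset ι)
    (v : Fin n → Finset ι → ℝ)
    (hnorm : ∀ i : Fin n, v i ∅ = 0)
    (hnonneg : ∀ i : Fin n, ∀ S ⊆ M, 0 ≤ v i S)
    (hmono : ∀ i : Fin n, ∀ S T : Finset ι, T ⊆ S → S ⊆ M → v i T ≤ v i S)
    (P : Finset (Fin n))
    (hQ : (Finset.univ \ P).card = 1) :
    ∃ A : Fin n → Finset ι, IsAllocation M A ∧ EFprior v A P := by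
  classical
  obtain ⟨q, hq_eq⟩ := Finset.card_eq_one.1 hQ
  have hq : q ∉ P := by
    have : q ∈ Finset.univ \ P := by rw [hq_eq]; exact Finset.mem_singleton_self q
    exact (Finset.mem_sdiff.1 this).2
  have hPq : ∀ j, j ∉ P → j = q := by
    intro j hj
    have : j ∈ Finset.univ \ P := Finset.mem_sdiff.2 ⟨Finset.mem_univ j, hj⟩
    rw [hq_eq] at this
    exact Finset.mem_singleton.1 this
  have key : ∀ S : Finset ι, S ⊆ M →
      ∃ A : Fin n → Finset ι, IsAllocation S A ∧ EF1 v A ∧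
        ∀ i ∈ P, v i (A q) ≤ v i (A i) := by
    intro S
    induction S using Finset.induction_on with
    | empty =>
      intro _
      exact ⟨fun _ => ∅, ⟨fun i j _ => Finset.disjoint_empty_left _, by ext x; simp⟩,
        fun i j _ => Or.inl rfl, fun i _ => le_refl _⟩
    | @insert g S hgS ih =>
      intro hsub
      have hSM : S ⊆ M := (Finset.subset_insert g S).trans hsub
      have hgM : g ∈ M := hsub (Finset.mem_insert_self g S)
      obtain ⟨A, hA, hEF, hpr⟩ := ih hSM
      exact step_lemma v M hmono P q hq hPq S hSM g hgM hgS A hA hEF hpr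
  obtain ⟨A, hA, hEF, hpr⟩ := key M Finset.Subset.rfl
  refine ⟨A, hA, hEF, ?_⟩
  intro i hi j hj
  rw [hPq j hj]
  exact hpr i hi
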